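/- Let 𝓕 be any family of 6-element subsets of [60] = {1,...,60} such that for every 6-element subset S ⊆ [60] there exists B ∈ 𝓕 with |S ∩ B| ≥ 3. Then |𝓕| ≥ 97. -/

import Mathlib

open Finset

/-- Any family `𝓕` of 6-element subsets of `{1,…,60}` such that every
6-element subset of `{1,…,60}` meets some block of `𝓕` in at least three
elements has at least 97 blocks. -/
theorem stmt_5 (𝓕 : Finset (Finset ℕ))
    (hblocks : ∀ B ∈ 𝓕, B ⊆ Finset.Icc 1 60 ∧ B.card = 6)
    (hcover : ∀ S : Finset ℕ, S ⊆ Finset.Icc 1 60 → S.card = 6 →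
      ∃ B ∈ 𝓕, 3 ≤ (S ∩ B).card) :
    97 ≤ 𝓕.card := by
  set U := Finset.Icc 1 60 with hU
  have hUcard : U.card = 60 := by simp [hU]
  -- per-block bound: each block covers at most 517870 six-sets
  have key : ∀ B ∈ 𝓕,
      ((powersetCard 6 U).filter (fun S => 3 ≤ (S ∩ B).card)).card ≤ 517870 := by
    intro B hB
    obtain ⟨hBU, hBcard⟩ := hblocks B hB
    have hUB : (U \ B).card = 54 := by
      rw [card_sdiff, inter_eq_left.mpr hBU, hUcard, hBcard]
    have hinj : ((powersetCard 6 U).filter (fun S => 3 ≤ (S ∩ B).card)).card ≤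
        ((Finset.Icc 3 6).biUnion (fun i =>
          powersetCard i B ×ˢ powersetCard (6 - i) (U \ B))).card := by
      apply Finset.card_le_card_of_injOn (fun S => (S ∩ B, S \ B))
      · intro S hS
        simp only [Finset.mem_coe, mem_filter, mem_powersetCard] at hS
        obtain ⟨⟨hSU, hScard⟩, h3⟩ := hS
        have hle : (S ∩ B).card ≤ 6 := by
          calc (S ∩ B).card ≤ S.card := card_le_card inter_subset_left
          _ = 6 := hScard
        have hsd : (S \ B).card + (S ∩ B).card = 6 := by
          rw [card_sdiff_add_card_inter, hScard]
        simp only [Finset.mem_coe, mem_biUnion, mem_Icc, mem_product, mem_powersetCard]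
        exact ⟨(S ∩ B).card, ⟨h3, hle⟩, ⟨inter_subset_right, rfl⟩,
          sdiff_subset_sdiff hSU le_rfl, by omega⟩
      · intro S1 _ S2 _ h
        have := congrArg (fun p : Finset ℕ × Finset ℕ => p.1 ∪ p.2) h
        have e1 : S1 ∩ B ∪ S1 \ B = S1 := sup_inf_sdiff S1 B
        have e2 : S2 ∩ B ∪ S2 \ B = S2 := sup_inf_sdiff S2 B
        simp only [] at this
        rw [e1, e2] at this
        exact this
    refine hinj.trans ?_
    refine (Finset.card_biUnion_le).trans ?_
    have : ∀ i ∈ Finset.Icc 3 6,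
        (powersetCard i B ×ˢ powersetCard (6 - i) (U \ B)).card =
          Nat.choose 6 i * Nat.choose 54 (6 - i) := by
      intro i _
      rw [card_product, card_powersetCard, card_powersetCard, hBcard, hUB]
    rw [Finset.sum_congr rfl this]
    decide
  -- every six-set is covered
  have hsub : powersetCard 6 U ⊆
      𝓕.biUnion (fun B => (powersetCard 6 U).filter (fun S => 3 ≤ (S ∩ B).card)) := by
    intro S hS
    rw [mem_powersetCard] at hS
    obtain ⟨B, hB, h3⟩ := hcover S hS.1 hS.2
    exact mem_biUnion.2 ⟨B, hB, mem_filter.2 ⟨mem_powersetCard.2 hS, h3⟩⟩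
  have h1 : (50063860 : ℕ) ≤ 𝓕.card * 517870 := by
    have hc : (powersetCard 6 U).card = 50063860 := by
      rw [card_powersetCard, hUcard]
      norm_num [Nat.choose]
    calc (50063860 : ℕ) = (powersetCard 6 U).card := hc.symm
      _ ≤ (𝓕.biUnion (fun B => (powersetCard 6 U).filter
            (fun S => 3 ≤ (S ∩ B).card))).card := card_le_card hsub
      _ ≤ ∑ B ∈ 𝓕, ((powersetCard 6 U).filter (fun S => 3 ≤ (S ∩ B).card)).card :=
            card_biUnion_le
      _ ≤ ∑ _B ∈ 𝓕, 517870 := Finset.sum_le_sum key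
      _ = 𝓕.card * 517870 := by rw [Finset.sum_const, smul_eq_mul]
  by_contra h
  push_neg at h
  have : 𝓕.card * 517870 ≤ 96 * 517870 := Nat.mul_le_mul_right _ (by omega)
  omega
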